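/- arXiv:2106.02132 — 5 statements merged into one kernel-verified Lean document; each statement's English description precedes it below -/
import Mathlib

section
/- Define polynomials q_n(y) by q_0 = 1 and q_{n+1}(y) = (y+2n) q_n(y) − n(n−1) q_{n-1}(y). Then q_n(y) = Σ_{k=1}^{n} C(n,k) · (n−1)!/(k−1)! · y^k for all n ≥ 1. -/
open Polynomial Finset

noncomputable def lcoef (n k : ℕ) : ℚ :=
  (n.choose k : ℚ) * ((n - 1).factorial : ℚ) / ((k - 1).factorial : ℚ)

noncomputable def S (n : ℕ) : Polynomial ℚ := ∑ k ∈ Finset.Icc 1 n, C (lcoef n k) * X ^ k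

lemma coeffS (n m : ℕ) : (S n).coeff m = if m ∈ Finset.Icc 1 n then lcoef n m else 0 := by
  simp [S, Polynomial.finset_sum_coeff, Polynomial.coeff_C_mul, Polynomial.coeff_X_pow,
    Finset.sum_ite_eq' (Finset.Icc 1 n), mul_ite]

lemma fQ (s : ℕ) : ((s+1).factorial : ℚ) = ((s:ℚ)+1) * (s.factorial : ℚ) := by
  rw [Nat.factorial_succ]; push_cast; ring

lemma fne (s : ℕ) : ((s.factorial : ℚ)) ≠ 0 := by
  exact_mod_cast s.factorial_ne_zero

lemma key (n : ℕ) :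
    S (n + 2) = (X + C (2 * ((n:ℚ)+1))) * S (n + 1) - C (((n:ℚ)+1) * (n:ℚ)) * S n := by
  ext m
  rw [add_mul, Polynomial.coeff_sub, Polynomial.coeff_add, Polynomial.coeff_C_mul,
    Polynomial.coeff_C_mul]
  cases m with
  | zero => simp [coeffS, Polynomial.coeff_X_mul]
  | succ m =>
    rw [Polynomial.coeff_X_mul, coeffS, coeffS, coeffS, coeffS]
    simp only [Finset.mem_Icc]
    rcases Nat.lt_or_ge (n+2) (m+1) with h | h
    · rw [if_neg (by omega), if_neg (by omega), if_neg (by omega), if_neg (by omega)]; ring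
    rcases eq_or_lt_of_le h with h2 | h2
    · -- m+1 = n+2, i.e. m = n+1
      obtain rfl : m = n + 1 := by omega
      rw [if_pos (by omega), if_pos (by omega), if_neg (by omega), if_neg (by omega)]
      simp only [lcoef, Nat.choose_self, Nat.cast_one, one_mul]
      rw [div_self (fne _), div_self (fne _)]; ring
    rcases eq_or_lt_of_le (Nat.lt_succ_iff.mp h2) with h3 | h3
    · -- m+1 = n+1, m = n
      obtain rfl : m = n := by omega
      cases m with
      | zero => norm_num [lcoef, Nat.factorial]
      | succ p =>
        rw [if_pos (by omega), if_pos (by omega), if_pos (by omega), if_neg (by omega)]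
        simp only [lcoef, Nat.choose_succ_self_right, Nat.choose_self]
        push_cast
        simp only [show p+1+2-1 = p+2 from rfl, show p+1+1-1 = p+1 from rfl,
          show p+1-1 = p from rfl, show p+2-1 = p+1 from rfl, fQ]
        push_cast
        field_simp
        ring
    · -- m+1 ≤ n
      have hm : m + 1 ≤ n := by omega
      cases m with
      | zero =>
        obtain ⟨p, rfl⟩ : ∃ p, n = p + 1 := ⟨n-1, by omega⟩
        rw [if_pos (by omega), if_neg (by omega), if_pos (by omega), if_pos (by omega)]
        simp only [lcoef, Nat.zero_add, Nat.choose_one_right]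
        push_cast
        simp only [show p+1+2-1 = p+2 from rfl, show p+1+1-1 = p+1 from rfl,
          show p+1-1 = p from rfl, show (1:ℕ)-1 = 0 from rfl, fQ, Nat.factorial_zero]
        push_cast
        field_simp
        ring
      | succ m' =>
        obtain ⟨d, rfl⟩ : ∃ d, n = m' + 2 + d := ⟨n - (m'+2), by omega⟩
        rw [if_pos (by omega), if_pos (by omega), if_pos (by omega), if_pos (by omega)]
        simp only [lcoef]
        rw [Nat.cast_choose ℚ (by omega : m'+1+1 ≤ m'+2+d+2),
            Nat.cast_choose ℚ (by omega : m'+1 ≤ m'+2+d+1),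
            Nat.cast_choose ℚ (by omega : m'+1+1 ≤ m'+2+d+1),
            Nat.cast_choose ℚ (by omega : m'+1+1 ≤ m'+2+d)]
        rw [show m'+2+d+2 - (m'+1+1) = d+2 from by omega,
            show m'+2+d+1 - (m'+1) = d+2 from by omega,
            show m'+2+d+1 - (m'+1+1) = d+1 from by omega,
            show m'+2+d - (m'+1+1) = d from by omega,
            show m'+2+d+2-1 = m'+d+3 from by omega,
            show m'+2+d+1-1 = m'+d+2 from by omega,
            show m'+2+d-1 = m'+d+1 from by omega,
            show m'+1+1-1 = m'+1 from by omega,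
            show m'+1-1 = m' from by omega,
            show m'+2+d+2 = m'+d+4 from by omega,
            show m'+2+d+1 = m'+d+3 from by omega,
            show m'+2+d = m'+d+2 from by omega]
        simp only [show m'+d+4 = (m'+d+3)+1 from rfl, show m'+d+3 = (m'+d+2)+1 from rfl,
          show m'+d+2 = (m'+d+1)+1 from rfl, show m'+d+1 = (m'+d)+1 from rfl,
          show m'+1+1 = m'+1+1 from rfl, fQ]
        have h1 : ((m':ℚ)+1) ≠ 0 := by positivity
        have h2 : ((m':ℚ)+2) ≠ 0 := by positivity
        have h3 : ((d:ℚ)+1) ≠ 0 := by positivity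
        have h4 : ((d:ℚ)+2) ≠ 0 := by positivity
        push_cast
        field_simp
        ring

/-- For the Laguerre-type polynomials defined by `q_0 = 1` and
`q_{n+1}(y) = (y + 2n) q_n(y) - n(n-1) q_{n-1}(y)`, we have the explicit formula
`q_n(y) = Σ_{k=1}^n C(n,k) (n-1)!/(k-1)! y^k` for `n ≥ 1`. -/
theorem laguerre_type_explicit (q : ℕ → Polynomial ℚ)
    (h0 : q 0 = 1)
    (hrec : ∀ n : ℕ,
      q (n + 1) = (X + C (2 * (n : ℚ))) * q n - C ((n : ℚ) * ((n : ℚ) - 1)) * q (n - 1)) :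
    ∀ n : ℕ, 1 ≤ n →
      q n = ∑ k ∈ Finset.Icc 1 n,
        C ((n.choose k : ℚ) * ((n - 1).factorial : ℚ) / ((k - 1).factorial : ℚ)) * X ^ k := by
  have hq1 : q 1 = S 1 := by
    have hr := hrec 0
    norm_num [h0] at hr
    rw [hr]
    simp [S, lcoef, Nat.factorial]
  have hq2 : q 2 = S 2 := by
    have hr := hrec 1
    norm_num [hq1] at hr
    rw [hr, key 0]
    norm_num
  have main : ∀ n, q (n+1) = S (n+1) ∧ q (n+2) = S (n+2) := by
    intro n
    induction n with
    | zero => exact ⟨hq1, hq2⟩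
    | succ p ih =>
      refine ⟨ih.2, ?_⟩
      have hr := hrec (p+2)
      rw [show (p+2) - 1 = p+1 from rfl] at hr
      rw [hr, ih.1, ih.2, key (p+1)]
      push_cast
      ring_nf
  intro n hn
  obtain ⟨m, rfl⟩ : ∃ m, n = m + 1 := ⟨n - 1, by omega⟩
  exact (main m).1
end

section
/- Define p_n(x) by p_0=1, p_1=x, and p_{n+1} = (2n−1) p_n + x^2 p_{n-1}. Then p_n(x) = Σ_{k=0}^{n-1} C(n+k−1, 2k) · (2k)!/(2^k k!) · x^{n−k} for all n ≥ 1. -/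
open Polynomial

noncomputable def besselQ (n k : ℕ) : ℚ :=
  ((n + k - 1).choose (2 * k) : ℚ) * ((2 * k).factorial : ℚ) / (2 ^ k * (k.factorial : ℚ))

lemma besselQ_key (i k : ℕ) (hk : k ≤ i + 1) :
    besselQ (i+3) (k+1) = (2*(i:ℚ)+3) * besselQ (i+2) k + besselQ (i+1) (k+1) := by
  have h1 : (i+3) + (k+1) - 1 = (i+k+1) + 2 := by omega
  have h2 : (i+2) + k - 1 = i+k+1 := by omega
  have h3 : (i+1) + (k+1) - 1 = i+k+1 := by omega
  unfold besselQ
  rw [h1, h2, h3]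
  set m := i + k + 1 with hm
  have hp : (m+2).choose (2*(k+1)) =
      (m+1).choose (2*k+1) + (m.choose (2*k+1) + m.choose (2*(k+1))) := by
    have e : 2*(k+1) = (2*k+1)+1 := by ring
    rw [e, Nat.choose_succ_succ (m+1) (2*k+1), Nat.choose_succ_succ m (2*k),
      Nat.choose_succ_succ m (2*k+1)]
  have ha := Nat.add_one_mul_choose_eq m (2*k)
  have hb := Nat.choose_succ_right_eq m (2*k)
  have hc : m - 2*k = i + 1 - k := by omega
  have hnat : (2*k+1) * ((m+1).choose (2*k+1) + m.choose (2*k+1))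
      = (2*i+3) * m.choose (2*k) := by
    have h4 : (2*k+1) * ((m+1).choose (2*k+1) + m.choose (2*k+1))
        = (m+1) * m.choose (2*k) + m.choose (2*k) * (i+1-k) := by
      rw [Nat.mul_add, mul_comm (2*k+1) ((m+1).choose (2*k+1)), ← ha,
        mul_comm (2*k+1) (m.choose (2*k+1)), hb, hc]
    rw [h4]
    have h5 : m + 1 + (i+1-k) = 2*i+3 := by omega
    calc (m+1) * m.choose (2*k) + m.choose (2*k) * (i+1-k)
        = (m+1+(i+1-k)) * m.choose (2*k) := by ring
      _ = (2*i+3) * m.choose (2*k) := by rw [h5]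
  have hq : ((2*(k:ℚ)+1)) * (((m+1).choose (2*k+1) : ℚ) + (m.choose (2*k+1) : ℚ))
      = (2*(i:ℚ)+3) * (m.choose (2*k) : ℚ) := by
    have := congrArg (Nat.cast : ℕ → ℚ) hnat
    push_cast at this
    linarith [this]
  rw [hp]
  have e1 : ((2*(k+1)).factorial : ℚ) = (2*k+2) * ((2*k+1) * ((2*k).factorial : ℚ)) := by
    have e : 2*(k+1) = (2*k+1)+1 := by ring
    rw [e, Nat.factorial_succ, Nat.factorial_succ]
    push_cast; ring
  have e2 : ((k+1).factorial : ℚ) = (k+1) * (k.factorial : ℚ) := by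
    rw [Nat.factorial_succ]; push_cast; ring
  have hkf : (k.factorial : ℚ) ≠ 0 := by exact_mod_cast k.factorial_ne_zero
  have h2k : (2:ℚ)^k ≠ 0 := by positivity
  have hk1 : ((k:ℚ)+1) ≠ 0 := by positivity
  push_cast
  rw [e1, e2]
  field_simp
  linear_combination (2 * (2:ℚ)^k) * hq

noncomputable def besselF (n : ℕ) : Polynomial ℚ :=
  ∑ k ∈ Finset.range n, C (besselQ n k) * X ^ (n - k)

lemma besselQ_zero (n : ℕ) : besselQ n 0 = 1 := by
  simp [besselQ]

lemma besselQ_vanish (n k : ℕ) (h : n + k - 1 < 2 * k) : besselQ n k = 0 := by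
  simp [besselQ, Nat.choose_eq_zero_of_lt h]

lemma besselF_step (i : ℕ) :
    besselF (i+3) = C (2*((i:ℚ)+2)-1) * besselF (i+2) + X ^ 2 * besselF (i+1) := by
  have hc : (2*((i:ℚ)+2)-1) = 2*(i:ℚ)+3 := by ring
  rw [hc]
  have hx : X ^ 2 * besselF (i+1)
      = ∑ k ∈ Finset.range (i+3), C (besselQ (i+1) k) * X ^ (i+3-k) := by
    unfold besselF
    rw [Finset.mul_sum]
    conv_rhs => rw [Finset.sum_range_succ, Finset.sum_range_succ]
    rw [besselQ_vanish (i+1) (i+1) (by omega), besselQ_vanish (i+1) (i+2) (by omega)]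
    simp only [map_zero, zero_mul, add_zero]
    apply Finset.sum_congr rfl
    intro k hk
    simp only [Finset.mem_range] at hk
    have h : i + 3 - k = 2 + (i + 1 - k) := by omega
    rw [h, pow_add]
    ring
  have hy : C (2*(i:ℚ)+3) * besselF (i+2)
      = ∑ k ∈ Finset.range (i+2), C ((2*(i:ℚ)+3) * besselQ (i+2) k) * X ^ (i+2-k) := by
    unfold besselF
    rw [Finset.mul_sum]
    apply Finset.sum_congr rfl
    intro k hk
    rw [map_mul]
    ring
  rw [hx, hy]
  unfold besselF
  rw [Finset.sum_range_succ' (fun k => C (besselQ (i+3) k) * X ^ (i+3-k)) (i+2),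
    Finset.sum_range_succ' (fun k => C (besselQ (i+1) k) * X ^ (i+3-k)) (i+2)]
  rw [besselQ_zero, besselQ_zero, add_comm (∑ k ∈ Finset.range (i+2),
    C ((2*(i:ℚ)+3) * besselQ (i+2) k) * X ^ (i+2-k)), add_assoc]
  have hsum : ∑ k ∈ Finset.range (i+2), C (besselQ (i+3) (k+1)) * X ^ (i+3-(k+1))
      = ∑ k ∈ Finset.range (i+2), (C (besselQ (i+1) (k+1)) * X ^ (i+3-(k+1))
        + C ((2*(i:ℚ)+3) * besselQ (i+2) k) * X ^ (i+2-k)) := by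
    apply Finset.sum_congr rfl
    intro k hk
    simp only [Finset.mem_range] at hk
    rw [besselQ_key i k (by omega), map_add, show i+3-(k+1) = i+2-k from by omega]
    ring
  rw [hsum, Finset.sum_add_distrib]
  ring

/-- For the Bessel-type polynomials defined by `p_0 = 1`, `p_1 = x`, and
`p_{n+1} = (2n-1) p_n + x² p_{n-1}` (for `n ≥ 1`), we have the explicit formula
`p_n(x) = Σ_{k=0}^{n-1} C(n+k-1, 2k) (2k)!/(2^k k!) x^{n-k}` for `n ≥ 1`. -/
theorem bessel_type_explicit (p : ℕ → Polynomial ℚ)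
    (h0 : p 0 = 1) (h1 : p 1 = X)
    (hrec : ∀ n : ℕ, 1 ≤ n →
      p (n + 1) = C (2 * (n : ℚ) - 1) * p n + X ^ 2 * p (n - 1)) :
    ∀ n : ℕ, 1 ≤ n →
      p n = ∑ k ∈ Finset.range n,
        C (((n + k - 1).choose (2 * k) : ℚ) *
            ((2 * k).factorial : ℚ) / (2 ^ k * (k.factorial : ℚ))) * X ^ (n - k) := by
  have hbase1 : p 1 = besselF 1 := by
    rw [h1]
    simp [besselF, besselQ]
  have hbase2 : p 2 = besselF 2 := by
    have hr := hrec 1 le_rfl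
    norm_num at hr
    rw [hr, h0, h1]
    rw [besselF]
    rw [Finset.sum_range_succ, Finset.sum_range_succ, Finset.sum_range_zero]
    have e0 : besselQ 2 0 = 1 := besselQ_zero 2
    have e1 : besselQ 2 1 = 1 := by
      norm_num [besselQ, Nat.factorial]
    rw [e0, e1]
    simp
    ring
  have H : ∀ i : ℕ, p (i+1) = besselF (i+1) ∧ p (i+2) = besselF (i+2) := by
    intro i
    induction i with
    | zero => exact ⟨hbase1, hbase2⟩
    | succ j ih =>
      refine ⟨ih.2, ?_⟩
      have hr := hrec (j+2) (by omega)
      have hsub : j + 2 - 1 = j + 1 := by omega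
      rw [hsub] at hr
      have hcast : ((j+2 : ℕ) : ℚ) = (j:ℚ)+2 := by push_cast; ring
      rw [hr, ih.1, ih.2, hcast, ← besselF_step j]
  intro n hn
  obtain ⟨m, rfl⟩ : ∃ m, n = m + 1 := ⟨n - 1, by omega⟩
  exact (H m).1
end

section
/- Define p_n(x) by p_0 = 1, p_1 = x, p_{n+1}(x) = x·p_n(x) + n(n−1)·p_{n-1}(x). Then Σ_n p_n(x) v^n/n! = ((1+v)/(1−v))^{x/2}, i.e., n!·[v^n] exp((x/2)·log((1+v)/(1−v))) = p_n(x), as an identity of formal power series over ℚ[x]. -/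
open Polynomial

/-- Formal exponential `exp(f) = Σ_k f^k/k!` of a power series `f` with zero constant
term, over a `ℚ`-algebra. -/
noncomputable def expPS {A : Type*} [CommRing A] [Algebra ℚ A] (f : PowerSeries A) :
    PowerSeries A :=
  PowerSeries.mk fun n =>
    ∑ k ∈ Finset.range (n + 1), (k.factorial : ℚ)⁻¹ • PowerSeries.coeff (R := A) n (f ^ k)

/-- The power series `(x/2) log((1+v)/(1-v)) = x Σ_{m odd} v^m/m` over `ℚ[x]`. -/
noncomputable def tanhSysArg : PowerSeries (Polynomial ℚ) :=
  PowerSeries.mk fun m => if Odd m then ((1 : ℚ) / m) • X else 0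

namespace TanhAux

lemma coeff_pow_eq_zero {A : Type*} [CommRing A] {f : PowerSeries A}
    (hf : PowerSeries.constantCoeff (R := A) f = 0) {n k : ℕ} (h : n < k) :
    PowerSeries.coeff (R := A) n (f ^ k) = 0 := by
  have hd : (PowerSeries.X : PowerSeries A) ^ k ∣ f ^ k :=
    pow_dvd_pow_of_dvd (PowerSeries.X_dvd_iff.mpr hf) k
  exact PowerSeries.X_pow_dvd_iff.mp hd n h

lemma coeff_expPS {A : Type*} [CommRing A] [Algebra ℚ A] {f : PowerSeries A}
    (hf : PowerSeries.constantCoeff (R := A) f = 0) (n N : ℕ) (h : n + 1 ≤ N) :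
    PowerSeries.coeff (R := A) n (expPS f)
      = ∑ k ∈ Finset.range N, (k.factorial : ℚ)⁻¹ • PowerSeries.coeff (R := A) n (f ^ k) := by
  rw [expPS, PowerSeries.coeff_mk]
  refine Finset.sum_subset (Finset.range_subset_range.mpr h) ?_
  intro k hk hk'
  rw [coeff_pow_eq_zero hf, smul_zero]
  simp only [Finset.mem_range, not_lt] at hk'
  omega

lemma deriv_expPS {A : Type*} [CommRing A] [Algebra ℚ A] {f : PowerSeries A}
    (hf : PowerSeries.constantCoeff (R := A) f = 0) :
    PowerSeries.derivative A (expPS f) = PowerSeries.derivative A f * expPS f := by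
  ext n
  rw [PowerSeries.coeff_derivative, coeff_expPS hf (n+1) (n+2) le_rfl]
  have lhs : (∑ k ∈ Finset.range (n+2),
      (k.factorial : ℚ)⁻¹ • PowerSeries.coeff (R := A) (n+1) (f ^ k)) * (n+1)
      = ∑ k ∈ Finset.range (n+1),
        (k.factorial : ℚ)⁻¹ • PowerSeries.coeff (R := A) n (PowerSeries.derivative A f * f ^ k) := by
    rw [Finset.sum_mul, Finset.sum_range_succ']
    have h0 : ((0:ℕ).factorial : ℚ)⁻¹ • PowerSeries.coeff (R := A) (n+1) (f ^ 0) * (n+1) = 0 := by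
      simp [PowerSeries.coeff_one]
    rw [h0, add_zero]
    refine Finset.sum_congr rfl fun k _ => ?_
    have hD : PowerSeries.coeff (R := A) (n+1) (f ^ (k+1)) * (n+1)
        = PowerSeries.coeff (R := A) n (PowerSeries.derivative A (f ^ (k+1))) := by
      rw [PowerSeries.coeff_derivative]
    rw [smul_mul_assoc, hD, Derivation.leibniz_pow]
    simp only [Nat.add_sub_cancel, smul_eq_mul, map_nsmul]
    rw [smul_comm ((k+1).factorial : ℚ)⁻¹ (k+1 : ℕ), ← Nat.cast_smul_eq_nsmul ℚ (k+1),
      smul_smul]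
    congr 1
    · have hk : ((k:ℚ)+1) ≠ 0 := by positivity
      rw [Nat.factorial_succ]
      push_cast
      field_simp
    · rw [mul_comm]
  rw [lhs, PowerSeries.coeff_mul]
  have step : ∀ p ∈ Finset.HasAntidiagonal.antidiagonal n,
      PowerSeries.coeff (R := A) p.1 (PowerSeries.derivative A f) * PowerSeries.coeff (R := A) p.2 (expPS f)
        = ∑ k ∈ Finset.range (n+1), (k.factorial : ℚ)⁻¹ •
            (PowerSeries.coeff (R := A) p.1 (PowerSeries.derivative A f)
              * PowerSeries.coeff (R := A) p.2 (f ^ k)) := by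
    intro p hp
    rw [coeff_expPS hf p.2 (n+1)
      (by have := Finset.HasAntidiagonal.mem_antidiagonal.mp hp; omega), Finset.mul_sum]
    exact Finset.sum_congr rfl fun k _ => mul_smul_comm _ _ _
  rw [Finset.sum_congr rfl step, Finset.sum_comm]
  refine Finset.sum_congr rfl fun k _ => ?_
  rw [PowerSeries.coeff_mul, Finset.smul_sum]

end TanhAux

namespace T2

open PowerSeries

abbrev R := Polynomial ℚ

noncomputable def g : PowerSeries R :=
  PowerSeries.mk fun n => if Even n then (X : R) else 0

lemma hconst : PowerSeries.constantCoeff (R := R) tanhSysArg = 0 := by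
  rw [tanhSysArg, PowerSeries.constantCoeff_mk]
  simp [Nat.odd_iff]

lemma deriv_f : PowerSeries.derivative R tanhSysArg = g := by
  ext n
  rw [PowerSeries.coeff_derivative, tanhSysArg, PowerSeries.coeff_mk, g, PowerSeries.coeff_mk]
  by_cases h : Even n
  · rw [if_pos (Even.add_one h), if_pos h]
    have hcast : ((n : R) + 1) = Polynomial.C ((n:ℚ) + 1) := by
      rw [map_add, Polynomial.C_1, Polynomial.C_eq_natCast]
    rw [Nat.cast_add, Nat.cast_one, hcast, smul_mul_assoc, mul_comm,
      ← Polynomial.smul_eq_C_mul, smul_smul]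
    have hne : ((n:ℚ) + 1) ≠ 0 := by positivity
    rw [one_div, inv_mul_cancel₀ (by exact_mod_cast hne), one_smul]
  · rw [if_neg (by simpa [Nat.even_add_one] using h), if_neg h, zero_mul]

lemma key : (1 - PowerSeries.X ^ 2) * g = PowerSeries.C (R := R) Polynomial.X := by
  refine PowerSeries.ext fun n => ?_
  rw [sub_mul, one_mul, map_sub, PowerSeries.coeff_X_pow_mul', PowerSeries.coeff_C]
  match n with
  | 0 => simp [g]
  | 1 => simp [g, PowerSeries.coeff_mk]
  | (m+2) =>
    rw [if_pos (by omega), if_neg (by omega)]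
    have : m + 2 - 2 = m := by omega
    rw [this, g]
    simp only [PowerSeries.coeff_mk]
    have hpar : Even (m+2) ↔ Even m := by
      constructor
      · rintro ⟨k, hk⟩; exact ⟨k-1, by omega⟩
      · rintro ⟨k, hk⟩; exact ⟨k+1, by omega⟩
    by_cases hm : Even m
    · rw [if_pos (hpar.mpr hm), if_pos hm, sub_self]
    · rw [if_neg (fun h => hm (hpar.mp h)), if_neg hm, sub_self]

noncomputable def E : PowerSeries R := expPS tanhSysArg

lemma ode : (1 - PowerSeries.X ^ 2) * PowerSeries.derivative R E = PowerSeries.C (R := R) Polynomial.X * E := by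
  rw [E, TanhAux.deriv_expPS hconst, deriv_f, ← mul_assoc, key]

lemma recE (n : ℕ) :
    PowerSeries.coeff (R := R) (n+2+1) E * ((n:R)+2+1)
      = Polynomial.X * PowerSeries.coeff (R := R) (n+2) E
        + PowerSeries.coeff (R := R) (n+1) E * ((n:R)+1) := by
  have h := congrArg (PowerSeries.coeff (R := R) (n+2)) ode
  rw [sub_mul, one_mul, map_sub, PowerSeries.coeff_X_pow_mul',
    if_pos (by omega : 2 ≤ n+2), PowerSeries.coeff_C_mul] at h
  have h2 : n + 2 - 2 = n := by omega
  rw [h2, PowerSeries.coeff_derivative, PowerSeries.coeff_derivative] at h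
  push_cast at h ⊢
  linear_combination h

lemma recE1 :
    PowerSeries.coeff (R := R) 2 E * (2:R) = Polynomial.X * PowerSeries.coeff (R := R) 1 E := by
  have h := congrArg (PowerSeries.coeff (R := R) 1) ode
  rw [sub_mul, one_mul, map_sub, PowerSeries.coeff_X_pow_mul',
    if_neg (by omega), PowerSeries.coeff_C_mul, sub_zero,
    PowerSeries.coeff_derivative] at h
  push_cast at h ⊢
  linear_combination h

lemma E0 : PowerSeries.coeff (R := R) 0 E = 1 := by
  rw [E, expPS, PowerSeries.coeff_mk, Finset.sum_range_one, pow_zero,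
    Nat.factorial_zero, PowerSeries.coeff_one]
  norm_num

lemma E1 : PowerSeries.coeff (R := R) 1 E = Polynomial.X := by
  rw [E, expPS, PowerSeries.coeff_mk]
  rw [Finset.sum_range_succ, Finset.sum_range_one, pow_zero, pow_one,
    PowerSeries.coeff_one, tanhSysArg, PowerSeries.coeff_mk,
    if_pos (by decide : Odd 1), if_neg (by decide : ¬ (1 = 0))]
  norm_num

end T2

namespace T2

lemma recE' (m : ℕ) (hm : 1 ≤ m) :
    PowerSeries.coeff (R := R) (m+2) E * ((m:R)+2)
      = Polynomial.X * PowerSeries.coeff (R := R) (m+1) E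
        + PowerSeries.coeff (R := R) m E * (m:R) := by
  obtain ⟨k, rfl⟩ : ∃ k, m = k+1 := ⟨m-1, by omega⟩
  have h := recE k
  push_cast at h ⊢
  linear_combination h

end T2

/-- For `p_0 = 1`, `p_1 = x`, `p_{n+1} = x p_n + n(n-1) p_{n-1}` (for `n ≥ 1`),
the exponential generating function is `Σ_n p_n(x) v^n/n! = ((1+v)/(1-v))^{x/2}`. -/
theorem tanh_system_egf (p : ℕ → Polynomial ℚ)
    (h0 : p 0 = 1) (h1 : p 1 = X)
    (hrec : ∀ n : ℕ, 1 ≤ n →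
      p (n + 1) = X * p n + C ((n : ℚ) * ((n : ℚ) - 1)) * p (n - 1)) :
    (PowerSeries.mk fun n => (n.factorial : ℚ)⁻¹ • p n) = expPS tanhSysArg := by
  have key : ∀ n, p n = (n.factorial : ℚ) • PowerSeries.coeff (R := T2.R) n T2.E ∧
      p (n+1) = ((n+1).factorial : ℚ) • PowerSeries.coeff (R := T2.R) (n+1) T2.E := by
    intro n
    induction n with
    | zero =>
      constructor
      · rw [h0, T2.E0]; norm_num
      · rw [h1, T2.E1]; norm_num
    | succ m ih =>
      refine ⟨ih.2, ?_⟩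
      rw [hrec (m+1) (by omega), Nat.add_sub_cancel, ih.2, ih.1]
      rcases Nat.eq_zero_or_pos m with rfl | hm
      · have h := T2.recE1
        simp only [Polynomial.smul_eq_C_mul]
        push_cast
        simp only [map_mul, map_sub, map_add, map_one, map_natCast, Polynomial.C_1]
        norm_num
        linear_combination -h
      · have h := T2.recE' m hm
        have hidx : m + 1 + 1 = m + 2 := by omega
        simp only [hidx] at *
        simp only [Polynomial.smul_eq_C_mul, Nat.factorial_succ]
        push_cast
        simp only [map_mul, map_sub, map_add, map_one, map_natCast, Polynomial.C_1]
        linear_combination -(((m:T2.R))+1) * ((m.factorial : ℕ) : T2.R) * h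
  refine PowerSeries.ext fun n => ?_
  rw [PowerSeries.coeff_mk, (key n).1, smul_smul,
    inv_mul_cancel₀ (by exact_mod_cast Nat.factorial_ne_zero n), one_smul]
  rfl
end

section
/- If V is a formal power series over ℚ with V(0)=0 and V'(0) invertible, with compositional inverse Z, then the coefficient matrices P and Q defined by Z(v)^k/k! = Σ_n p_{nk} v^n/n! and V(z)^k/k! = Σ_n q_{nk} z^n/n! are mutually inverse: Σ_m q_{nm} p_{mk} = δ_{nk}. -/
open PowerSeries

/-- Composition `f(g(v))` of formal power series over `ℚ`, for `g` with zero
constant term (so that the coefficient of `v^n` only involves `k ≤ n`). -/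
noncomputable def compPS (f g : PowerSeries ℚ) : PowerSeries ℚ :=
  PowerSeries.mk fun n =>
    ∑ k ∈ Finset.range (n + 1), PowerSeries.coeff (R := ℚ) k f * PowerSeries.coeff (R := ℚ) n (g ^ k)

/-- The coefficient matrix `p_{nk} = n! [v^n](Z^k/k!)`. -/
noncomputable def coeffMatrix (Z : PowerSeries ℚ) (n k : ℕ) : ℚ :=
  (n.factorial : ℚ) * PowerSeries.coeff (R := ℚ) n (Z ^ k) / (k.factorial : ℚ)

lemma coeff_pow_eq_zero {g : PowerSeries ℚ} (hg : PowerSeries.constantCoeff (R := ℚ) g = 0)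
    {n k : ℕ} (h : n < k) : PowerSeries.coeff (R := ℚ) n (g ^ k) = 0 := by
  have hdvd : (PowerSeries.X : PowerSeries ℚ) ^ k ∣ g ^ k :=
    pow_dvd_pow_of_dvd (PowerSeries.X_dvd_iff.mpr hg) k
  exact PowerSeries.X_pow_dvd_iff.mp hdvd n h

lemma sum_antidiag_square {n : ℕ} (H : ℕ × ℕ → ℚ)
    (hH : ∀ p : ℕ × ℕ, n < p.1 + p.2 → H p = 0) :
    ∑ k ∈ Finset.range (n + 1), ∑ p ∈ Finset.HasAntidiagonal.antidiagonal k, H p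
      = ∑ p ∈ Finset.range (n + 1) ×ˢ Finset.range (n + 1), H p := by
  rw [← Finset.sum_biUnion]
  · apply Finset.sum_subset
    · intro p hp
      simp only [Finset.mem_biUnion, Finset.mem_range, Finset.HasAntidiagonal.mem_antidiagonal] at hp
      obtain ⟨k, hk, hpk⟩ := hp
      simp only [Finset.mem_product, Finset.mem_range]
      omega
    · intro p hp hnp
      apply hH
      by_contra hc
      push_neg at hc
      exact hnp (Finset.mem_biUnion.mpr ⟨p.1 + p.2, Finset.mem_range.mpr (by omega),
        Finset.HasAntidiagonal.mem_antidiagonal.mpr rfl⟩)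
  · intro a _ b _ hab
    simp only [Function.onFun, Finset.disjoint_left, Finset.HasAntidiagonal.mem_antidiagonal]
    intro p hp hq
    exact hab (hp ▸ hq)

lemma compPS_one (g : PowerSeries ℚ) : compPS 1 g = 1 := by
  ext n
  simp only [compPS, PowerSeries.coeff_mk, PowerSeries.coeff_one]
  rw [Finset.sum_eq_single 0]
  · simp
  · intro b _ hb; simp [hb]
  · intro h; simp at h

lemma compPS_mul {g : PowerSeries ℚ} (hg : PowerSeries.constantCoeff (R := ℚ) g = 0)
    (f₁ f₂ : PowerSeries ℚ) :
    compPS (f₁ * f₂) g = compPS f₁ g * compPS f₂ g := by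
  ext n
  set T : ℕ × ℕ → ℚ := fun p =>
    PowerSeries.coeff (R := ℚ) p.1 f₁ * PowerSeries.coeff (R := ℚ) p.2 f₂
      * PowerSeries.coeff (R := ℚ) n (g ^ (p.1 + p.2)) with hT
  have hT0 : ∀ p : ℕ × ℕ, n < p.1 + p.2 → T p = 0 := by
    intro p hp
    simp [hT, coeff_pow_eq_zero hg hp]
  have hLHS : PowerSeries.coeff (R := ℚ) n (compPS (f₁ * f₂) g)
      = ∑ p ∈ Finset.range (n + 1) ×ˢ Finset.range (n + 1), T p := by
    simp only [compPS, PowerSeries.coeff_mk]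
    rw [← sum_antidiag_square T hT0]
    refine Finset.sum_congr rfl fun k _ => ?_
    rw [PowerSeries.coeff_mul, Finset.sum_mul]
    refine Finset.sum_congr rfl fun p hp => ?_
    rw [Finset.HasAntidiagonal.mem_antidiagonal] at hp
    simp [hT, hp, mul_assoc]
  have hRHS : PowerSeries.coeff (R := ℚ) n (compPS f₁ g * compPS f₂ g)
      = ∑ p ∈ Finset.range (n + 1) ×ˢ Finset.range (n + 1), T p := by
    rw [PowerSeries.coeff_mul]
    simp only [compPS, PowerSeries.coeff_mk]
    have hR : ∀ p : ℕ × ℕ, p ∈ Finset.HasAntidiagonal.antidiagonal n →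
        (∑ i ∈ Finset.range (p.1 + 1),
            PowerSeries.coeff (R := ℚ) i f₁ * PowerSeries.coeff (R := ℚ) p.1 (g ^ i))
        * (∑ j ∈ Finset.range (p.2 + 1),
            PowerSeries.coeff (R := ℚ) j f₂ * PowerSeries.coeff (R := ℚ) p.2 (g ^ j))
        = ∑ i ∈ Finset.range (n + 1), ∑ j ∈ Finset.range (n + 1),
            PowerSeries.coeff (R := ℚ) i f₁ * PowerSeries.coeff (R := ℚ) p.1 (g ^ i)
            * (PowerSeries.coeff (R := ℚ) j f₂ * PowerSeries.coeff (R := ℚ) p.2 (g ^ j)) := by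
      intro p hp
      rw [Finset.HasAntidiagonal.mem_antidiagonal] at hp
      rw [Finset.sum_mul_sum]
      rw [Finset.sum_subset (Finset.range_subset_range.mpr (by omega : p.1 + 1 ≤ n + 1))]
      · refine Finset.sum_congr rfl fun i _ => ?_
        rw [Finset.sum_subset (Finset.range_subset_range.mpr (by omega : p.2 + 1 ≤ n + 1))]
        intro j _ hj
        rw [Finset.mem_range, not_lt] at hj
        have h0 : PowerSeries.coeff (R := ℚ) p.2 (g ^ j) = 0 :=
          coeff_pow_eq_zero hg (by omega)
        simp [h0]
      · intro i _ hi
        rw [Finset.mem_range, not_lt] at hi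
        have h0 : PowerSeries.coeff (R := ℚ) p.1 (g ^ i) = 0 :=
          coeff_pow_eq_zero hg (by omega)
        simp [h0]
    rw [Finset.sum_congr rfl hR, Finset.sum_comm, Finset.sum_product]
    refine Finset.sum_congr rfl fun i _ => ?_
    rw [Finset.sum_comm]
    refine Finset.sum_congr rfl fun j _ => ?_
    simp only [hT]
    rw [pow_add, PowerSeries.coeff_mul, Finset.mul_sum]
    refine Finset.sum_congr rfl fun p _ => ?_
    ring
  rw [hLHS, hRHS]

lemma compPS_pow {g : PowerSeries ℚ} (hg : PowerSeries.constantCoeff (R := ℚ) g = 0)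
    (f : PowerSeries ℚ) (k : ℕ) : compPS (f ^ k) g = (compPS f g) ^ k := by
  induction k with
  | zero => simpa using compPS_one g
  | succ k ih => rw [pow_succ, compPS_mul hg, ih, pow_succ]

/-- For a formal power series `V` with `V(0) = 0` and `V'(0)` invertible, with
compositional inverse `Z`, the coefficient matrices `P` and `Q` of `Z` and `V` are
mutually inverse: `Σ_m q_{nm} p_{mk} = δ_{nk}`. -/
theorem coeffMatrix_inverse (V Z : PowerSeries ℚ)
    (hV0 : PowerSeries.constantCoeff (R := ℚ) V = 0)
    (hZ0 : PowerSeries.constantCoeff (R := ℚ) Z = 0)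
    (hV1 : PowerSeries.coeff (R := ℚ) 1 V ≠ 0)
    (hVZ : compPS V Z = PowerSeries.X)
    (hZV : compPS Z V = PowerSeries.X) :
    ∀ n k : ℕ,
      ∑ m ∈ Finset.range (n + 1), coeffMatrix V n m * coeffMatrix Z m k
        = if n = k then 1 else 0 := by
  intro n k
  have key : compPS (Z ^ k) V = PowerSeries.X ^ k := by
    rw [compPS_pow hV0, hZV]
  have hcoeff : PowerSeries.coeff (R := ℚ) n (PowerSeries.X ^ k : PowerSeries ℚ)
      = if n = k then 1 else 0 := by
    rw [PowerSeries.coeff_X_pow]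
  have hsum : ∑ m ∈ Finset.range (n + 1),
      PowerSeries.coeff (R := ℚ) m (Z ^ k) * PowerSeries.coeff (R := ℚ) n (V ^ m)
      = if n = k then 1 else 0 := by
    rw [← hcoeff, ← key]
    simp [compPS]
  calc ∑ m ∈ Finset.range (n + 1), coeffMatrix V n m * coeffMatrix Z m k
      = (n.factorial : ℚ) / (k.factorial : ℚ) * ∑ m ∈ Finset.range (n + 1),
          PowerSeries.coeff (R := ℚ) m (Z ^ k) * PowerSeries.coeff (R := ℚ) n (V ^ m) := by
        rw [Finset.mul_sum]
        refine Finset.sum_congr rfl fun m _ => ?_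
        simp only [coeffMatrix]
        have hm : (m.factorial : ℚ) ≠ 0 := Nat.cast_ne_zero.mpr m.factorial_ne_zero
        field_simp
    _ = if n = k then 1 else 0 := by
        rw [hsum]
        by_cases h : n = k
        · subst h
          simp [Nat.factorial_ne_zero,
            div_self (Nat.cast_ne_zero.mpr n.factorial_ne_zero : (n.factorial:ℚ) ≠ 0)]
        · simp [h]
end

section
/- The tanh-system polynomials q_n(y) with EGF exp(y·tanh z) arise as Poisson subordination of Laguerre-type polynomials: q_n(y) = Σ_m S(n,m) 2^{n−m} L_m(y), where L_m(y) = Σ_{k=1}^{m} C(m,k)·(−1)^{m−k}·(m−1)!/(k−1)!·y^k (L_0 = 1) are the polynomials with EGF exp(y·v/(1+v)). -/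
/-- The formal power series `sinh z = Σ_{n odd} z^n/n!` over `ℚ`. -/
noncomputable def sinhPS : PowerSeries ℚ :=
  PowerSeries.mk fun n => if Odd n then (n.factorial : ℚ)⁻¹ else 0

/-- The formal power series `cosh z = Σ_{n even} z^n/n!` over `ℚ`. -/
noncomputable def coshPS : PowerSeries ℚ :=
  PowerSeries.mk fun n => if Even n then (n.factorial : ℚ)⁻¹ else 0

/-- Stirling numbers of the second kind. -/
def stirlingSecond : ℕ → ℕ → ℚ
  | 0, 0 => 1
  | 0, _ + 1 => 0
  | _ + 1, 0 => 0
  | n + 1, k + 1 => stirlingSecond n k + (k + 1) * stirlingSecond n (k + 1)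

/-- The Laguerre-type polynomials `L_m(y) = Σ_{k=1}^m C(m,k) (-1)^{m-k} (m-1)!/(k-1)! y^k`
(`L_0 = 1`), with exponential generating function `exp(y v/(1+v))`. -/
noncomputable def laguerreL (m : ℕ) : Polynomial ℚ :=
  if m = 0 then 1 else
    ∑ k ∈ Finset.Icc 1 m,
      Polynomial.C ((m.choose k : ℚ) * (-1) ^ (m - k) *
          ((m - 1).factorial : ℚ) / ((k - 1).factorial : ℚ)) * Polynomial.X ^ k

open PowerSeries


lemma derivCoshPS : d⁄dX ℚ coshPS = sinhPS := by
  ext n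
  rw [coeff_derivative, coshPS, sinhPS, coeff_mk, coeff_mk]
  have : Even (n+1) ↔ Odd n := by
    rw [Nat.even_add_one, Nat.not_even_iff_odd]
  rw [if_congr this rfl rfl]
  split_ifs with h
  · rw [Nat.factorial_succ]
    push_cast
    rw [mul_inv]
    field_simp
  · simp

lemma derivSinhPS : d⁄dX ℚ sinhPS = coshPS := by
  ext n
  rw [coeff_derivative, coshPS, sinhPS, coeff_mk, coeff_mk]
  have : Odd (n+1) ↔ Even n := by
    rw [Nat.odd_add_one, Nat.not_odd_iff_even]
  rw [if_congr this rfl rfl]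
  split_ifs with h
  · rw [Nat.factorial_succ]
    push_cast
    rw [mul_inv]
    field_simp
  · simp

lemma constCoeff_cosh : constantCoeff (R := ℚ) coshPS = 1 := by
  rw [← coeff_zero_eq_constantCoeff_apply, coshPS, coeff_mk]
  simp

lemma cosh_ne_zero : coshPS ≠ 0 := by
  intro h
  have := constCoeff_cosh
  rw [h] at this
  simp at this

section
variable (T : PowerSeries ℚ) (hT : coshPS * T = sinhPS)
include hT

lemma constCoeff_T : constantCoeff (R := ℚ) T = 0 := by
  have := congrArg (constantCoeff (R := ℚ)) hT
  simp only [map_mul, constCoeff_cosh, one_mul] at this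
  rw [this, ← coeff_zero_eq_constantCoeff_apply, sinhPS, coeff_mk]
  simp

lemma derivT : d⁄dX ℚ T = 1 - T ^ 2 := by
  have h1 : d⁄dX ℚ (coshPS * T) = d⁄dX ℚ sinhPS := by rw [hT]
  rw [Derivation.leibniz, derivSinhPS, derivCoshPS, smul_eq_mul, smul_eq_mul] at h1
  -- coshPS • dT + T • sinhPS? check orientation
  have h2 : coshPS * (d⁄dX ℚ T) = coshPS * (1 - T ^ 2) := by
    have h3 : T * sinhPS = coshPS * T ^ 2 := by rw [← hT]; ring
    rw [h3] at h1
    rw [mul_sub, mul_one]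
    linear_combination h1
  exact mul_left_cancel₀ cosh_ne_zero h2

end


section
variable (T : PowerSeries ℚ)

lemma a_vanish (h0 : constantCoeff (R := ℚ) T = 0) {k n : ℕ} (h : n < k) :
    coeff (R := ℚ) n (T ^ k) = 0 := by
  have hd : (X : ℚ⟦X⟧) ^ k ∣ T ^ k :=
    pow_dvd_pow_of_dvd (X_dvd_iff.mpr h0) k
  exact (X_pow_dvd_iff.mp hd) n h

lemma a_rec (hd : d⁄dX ℚ T = 1 - T ^ 2) (k n : ℕ) :
    coeff (R := ℚ) (n + 1) (T ^ (k + 1)) * ((n : ℚ) + 1)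
      = ((k : ℚ) + 1) * (coeff (R := ℚ) n (T ^ k) - coeff (R := ℚ) n (T ^ (k + 2))) := by
  have h : d⁄dX ℚ (T ^ (k + 1)) = (k + 1 : ℕ) • (T ^ k * (1 - T ^ 2)) := by
    rw [Derivation.leibniz_pow, hd]
    simp [smul_smul]
  have h2 := congrArg (coeff (R := ℚ) n) h
  rw [coeff_derivative] at h2
  rw [h2]
  have : T ^ k * (1 - T ^ 2) = T ^ k - T ^ (k + 2) := by ring
  rw [this, map_nsmul, nsmul_eq_mul, map_sub]
  push_cast
  ring

lemma coeff_expF (n : ℕ) :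
    PowerSeries.coeff (R := Polynomial ℚ) n
        (expPS (PowerSeries.C (R := Polynomial ℚ) Polynomial.X *
          PowerSeries.map (Polynomial.C : ℚ →+* Polynomial ℚ) T))
      = ∑ k ∈ Finset.range (n + 1),
          ((k.factorial : ℚ)⁻¹ * coeff (R := ℚ) n (T ^ k)) • (Polynomial.X ^ k : Polynomial ℚ) := by
  rw [expPS, coeff_mk]
  refine Finset.sum_congr rfl fun k _ => ?_
  have h1 : (PowerSeries.C (R := Polynomial ℚ) Polynomial.X *
      PowerSeries.map (Polynomial.C : ℚ →+* Polynomial ℚ) T) ^ k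
      = PowerSeries.C (R := Polynomial ℚ) (Polynomial.X ^ k) *
        PowerSeries.map (Polynomial.C : ℚ →+* Polynomial ℚ) (T ^ k) := by
    rw [mul_pow, ← map_pow, ← map_pow]
  rw [h1]
  have h2 : PowerSeries.coeff (R := Polynomial ℚ) n
      (PowerSeries.C (R := Polynomial ℚ) (Polynomial.X ^ k) *
        PowerSeries.map (Polynomial.C : ℚ →+* Polynomial ℚ) (T ^ k))
      = Polynomial.X ^ k * Polynomial.C (coeff (R := ℚ) n (T ^ k)) := by
    rw [coeff_C_mul, coeff_map]
  rw [h2, Polynomial.smul_eq_C_mul, Polynomial.smul_eq_C_mul, map_mul]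
  ring

end

lemma Lc_zero (k : ℕ) : (laguerreL 0).coeff k = if k = 0 then 1 else 0 := by
  rw [laguerreL, if_pos rfl]
  simp [Polynomial.coeff_one, eq_comm]

lemma Lc_pos {m : ℕ} (hm : m ≠ 0) (k : ℕ) :
    (laguerreL m).coeff k =
      if 1 ≤ k ∧ k ≤ m then
        (m.choose k : ℚ) * (-1) ^ (m - k) * ((m - 1).factorial : ℚ) / ((k - 1).factorial : ℚ)
      else 0 := by
  rw [laguerreL, if_neg hm, Polynomial.finset_sum_coeff]
  simp only [Polynomial.coeff_C_mul, Polynomial.coeff_X_pow, mul_ite, mul_one, mul_zero]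
  simp only [eq_comm (a := k)]
  rw [Finset.sum_ite_eq' (Finset.Icc 1 m) k]
  simp [Finset.mem_Icc]

lemma fact_ne (n : ℕ) : ((n.factorial : ℚ)) ≠ 0 := by
  exact_mod_cast Nat.factorial_ne_zero n

lemma KI (m j : ℕ) :
    (laguerreL (m + 1)).coeff (j + 1) + 2 * (m : ℚ) * (laguerreL m).coeff (j + 1)
      = (laguerreL m).coeff j
        - ((j : ℚ) + 1) * ((j : ℚ) + 2) * (laguerreL m).coeff (j + 2) := by
  rcases Nat.eq_zero_or_pos m with hm0 | hm1
  · subst hm0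
    simp only [zero_add, Nat.cast_zero]
    rcases j with _ | j
    · rw [Lc_pos one_ne_zero, Lc_zero, Lc_zero, Lc_zero]
      norm_num
    · rw [Lc_pos one_ne_zero, Lc_zero, Lc_zero, Lc_zero]
      rw [if_neg (by omega)]
      simp
  · have hm : m ≠ 0 := hm1.ne'
    rcases j with _ | i
    · -- j = 0 case
      rw [Lc_pos hm 0, if_neg (by omega)]
      rcases Nat.lt_or_ge m 2 with h2 | h2
      · -- m = 1
        interval_cases m
        · rw [Lc_pos (by omega) 1, Lc_pos (by omega) 1, Lc_pos (by omega) 2,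
            if_pos (by omega), if_pos (by omega), if_neg (by omega)]
          norm_num
      · -- m ≥ 2, write m = r + 2
        obtain ⟨r, rfl⟩ : ∃ r, m = r + 2 := ⟨m - 2, by omega⟩
        rw [Lc_pos hm 1, Lc_pos hm 2, Lc_pos (Nat.succ_ne_zero _) 1,
          if_pos (by omega), if_pos (by omega), if_pos (by omega)]
        have e1 : r + 2 + 1 - 1 = r + 2 := by omega
        have e2 : r + 2 - 1 = r + 1 := by omega
        have e3 : r + 2 + 1 - 1 = r + 2 := by omega
        have e4 : r + 2 - 2 = r := by omega
        rw [e1, e2, e4]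
        have c1 : (r + 2 + 1).choose 1 = r + 3 := Nat.choose_one_right _
        have c2 : (r + 2).choose 1 = r + 2 := Nat.choose_one_right _
        have c3 : ((r + 2).choose 2 : ℚ) = (r + 2) * (r + 1) / 2 := by
          rw [Nat.cast_choose_two]
          push_cast
          ring
        rw [c1, c2, c3]
        have f1 : ((r + 2).factorial : ℚ) = (r + 2) * (r + 1).factorial := by
          rw [show r + 2 = r + 1 + 1 from rfl, Nat.factorial_succ]
          push_cast; ring
        rw [f1]
        have s1 : ((-1 : ℚ)) ^ (r + 2) = (-1) ^ r := by
          rw [pow_add]; norm_num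
        have s2 : ((-1 : ℚ)) ^ (r + 1) = -(-1) ^ r := by
          rw [pow_add]; norm_num
        rw [s1, s2]
        push_cast
        field_simp
        ring
    · -- j = i + 1 ≥ 1
      rcases Nat.lt_or_ge m (i + 1) with hB1 | h
      · -- j > m : everything vanishes
        rw [Lc_pos hm, Lc_pos hm, Lc_pos hm, Lc_pos (Nat.succ_ne_zero _),
          if_neg (by omega), if_neg (by omega), if_neg (by omega), if_neg (by omega)]
        push_cast; ring
      rcases Nat.eq_or_lt_of_le h with hB2 | h
      · -- j = m
        subst hB2
        rw [Lc_pos hm, Lc_pos hm, Lc_pos hm, Lc_pos (Nat.succ_ne_zero _),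
          if_pos (by omega), if_neg (by omega), if_pos (by omega), if_neg (by omega)]
        rw [Nat.sub_self, Nat.sub_self, Nat.choose_self, Nat.choose_self]
        push_cast
        field_simp
        ring
      rcases Nat.eq_or_lt_of_le h with hB3 | h
      · -- m = j + 1 = i + 2
        obtain rfl : m = i + 2 := by omega
        rw [Lc_pos hm (i + 1), Lc_pos hm (i + 2), Lc_pos hm (i + 3),
          Lc_pos (Nat.succ_ne_zero _) (i + 2),
          if_pos (by omega), if_pos (by omega), if_pos (by omega), if_neg (by omega)]
        have e1 : i + 2 + 1 - (i + 2) = 1 := by omega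
        have e2 : i + 2 - (i + 2) = 0 := by omega
        have e3 : i + 2 - (i + 1) = 1 := by omega
        have e4 : i + 2 + 1 - 1 = i + 2 := by omega
        have e5 : i + 2 - 1 = i + 1 := by omega
        have e6 : i + 2 - 1 = i + 1 := by omega
        have e7 : i + 1 - 1 = i := by omega
        rw [e1, e2, e3, e4, e5, e7]
        rw [Nat.choose_self, Nat.choose_succ_self_right]
        have c2 : (i + 2).choose (i + 1) = i + 2 := by
          rw [show i + 1 = i + 2 - 1 from by omega, Nat.choose_symm (by omega),
            Nat.choose_one_right]
        rw [c2]
        have f1 : ((i + 2).factorial : ℚ) = (i + 2) * (i + 1).factorial := by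
          rw [show i + 2 = i + 1 + 1 from rfl, Nat.factorial_succ]; push_cast; ring
        have f2 : ((i + 1).factorial : ℚ) = (i + 1) * i.factorial := by
          rw [Nat.factorial_succ]; push_cast; ring
        rw [f1, f2]
        push_cast
        field_simp
        ring
      · -- generic: m ≥ j + 2 = i + 3
        obtain ⟨r, rfl⟩ : ∃ r, m = i + 3 + r := ⟨m - (i + 3), by omega⟩
        rw [Lc_pos hm (i + 1), Lc_pos hm (i + 2), Lc_pos hm (i + 3),
          Lc_pos (Nat.succ_ne_zero _) (i + 2),
          if_pos (by omega), if_pos (by omega), if_pos (by omega), if_pos (by omega)]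
        have e1 : i + 3 + r + 1 - (i + 2) = r + 2 := by omega
        have e2 : i + 3 + r - (i + 2) = r + 1 := by omega
        have e3 : i + 3 + r - (i + 1) = r + 2 := by omega
        have e4 : i + 3 + r - (i + 3) = r := by omega
        have e5 : i + 3 + r + 1 - 1 = i + 3 + r := by omega
        have e6 : i + 3 + r - 1 = i + 2 + r := by omega
        have e7 : i + 2 - 1 = i + 1 := by omega
        have e8 : i + 1 - 1 = i := by omega
        have e9 : i + 3 - 1 = i + 2 := by omega
        rw [e1, e2, e3, e4, e5, e6, e7, e8, e9]
        have c1 : ((i + 3 + r + 1).choose (i + 2) : ℚ)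
            = ((i + 3 + r + 1).factorial : ℚ)
              / (((i + 2).factorial : ℚ) * ((r + 2).factorial : ℚ)) := by
          rw [Nat.cast_choose ℚ (show i + 2 ≤ i + 3 + r + 1 by omega),
            show i + 3 + r + 1 - (i + 2) = r + 2 from by omega]
        have c2 : ((i + 3 + r).choose (i + 2) : ℚ)
            = ((i + 3 + r).factorial : ℚ)
              / (((i + 2).factorial : ℚ) * ((r + 1).factorial : ℚ)) := by
          rw [Nat.cast_choose ℚ (show i + 2 ≤ i + 3 + r by omega),
            show i + 3 + r - (i + 2) = r + 1 from by omega]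
        have c3 : ((i + 3 + r).choose (i + 1) : ℚ)
            = ((i + 3 + r).factorial : ℚ)
              / (((i + 1).factorial : ℚ) * ((r + 2).factorial : ℚ)) := by
          rw [Nat.cast_choose ℚ (show i + 1 ≤ i + 3 + r by omega),
            show i + 3 + r - (i + 1) = r + 2 from by omega]
        have c4 : ((i + 3 + r).choose (i + 3) : ℚ)
            = ((i + 3 + r).factorial : ℚ)
              / (((i + 3).factorial : ℚ) * ((r).factorial : ℚ)) := by
          rw [Nat.cast_choose ℚ (show i + 3 ≤ i + 3 + r by omega),
            show i + 3 + r - (i + 3) = r from by omega]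
        rw [c1, c2, c3, c4]
        have f1 : ((i + 3 + r + 1).factorial : ℚ)
            = ((i : ℚ) + 3 + r + 1) * ((i : ℚ) + 3 + r) * ((i + 2 + r).factorial : ℚ) := by
          rw [show i + 3 + r + 1 = i + 2 + r + 1 + 1 by omega, Nat.factorial_succ,
            Nat.factorial_succ]
          push_cast; ring
        have f2 : ((i + 3 + r).factorial : ℚ)
            = ((i : ℚ) + 3 + r) * ((i + 2 + r).factorial : ℚ) := by
          rw [show i + 3 + r = i + 2 + r + 1 by omega, Nat.factorial_succ]
          push_cast; ring
        have f3 : ((i + 3).factorial : ℚ)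
            = ((i : ℚ) + 3) * ((i : ℚ) + 2) * ((i + 1).factorial : ℚ) := by
          rw [show i + 3 = i + 2 + 1 from rfl, Nat.factorial_succ,
            show i + 2 = i + 1 + 1 from rfl, Nat.factorial_succ]
          push_cast; ring
        have f4 : ((i + 2).factorial : ℚ)
            = ((i : ℚ) + 2) * ((i + 1).factorial : ℚ) := by
          rw [show i + 2 = i + 1 + 1 from rfl, Nat.factorial_succ]
          push_cast; ring
        have f5 : ((i + 1).factorial : ℚ) = ((i : ℚ) + 1) * (i.factorial : ℚ) := by
          rw [Nat.factorial_succ]; push_cast; ring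
        have f6 : ((r + 2).factorial : ℚ) = ((r : ℚ) + 2) * ((r : ℚ) + 1) * (r.factorial : ℚ) := by
          rw [show r + 2 = r + 1 + 1 from rfl, Nat.factorial_succ, Nat.factorial_succ]
          push_cast; ring
        have f7 : ((r + 1).factorial : ℚ) = ((r : ℚ) + 1) * (r.factorial : ℚ) := by
          rw [Nat.factorial_succ]; push_cast; ring
        rw [f1, f2, f3, f4, f6, f7, f5]
        have s1 : ((-1 : ℚ)) ^ (r + 2) = (-1) ^ r := by rw [pow_add]; norm_num
        have s2 : ((-1 : ℚ)) ^ (r + 1) = -(-1) ^ r := by rw [pow_add]; norm_num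
        rw [s1, s2]
        have hfi := fact_ne i
        have hfr := fact_ne r
        have hfm := fact_ne (i + 2 + r)
        push_cast
        field_simp
        ring

lemma stirling_zero (n : ℕ) : stirlingSecond (n + 1) 0 = 0 := rfl

lemma stirling_succ (n k : ℕ) :
    stirlingSecond (n + 1) (k + 1) = stirlingSecond n k + (k + 1) * stirlingSecond n (k + 1) :=
  rfl

lemma stirling_eq_zero : ∀ n m : ℕ, n < m → stirlingSecond n m = 0 := by
  intro n
  induction n with
  | zero => intro m h; obtain ⟨m', rfl⟩ : ∃ m', m = m' + 1 := ⟨m - 1, by omega⟩; rfl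
  | succ n ih =>
    intro m h
    obtain ⟨m', rfl⟩ : ∃ m', m = m' + 1 := ⟨m - 1, by omega⟩
    rw [stirling_succ, ih m' (by omega), ih (m' + 1) (by omega)]
    ring

/-- Poisson subordination for the tanh system: the polynomials `q_n` with
EGF `exp(y tanh z)` (where `tanh` is the formal series `T` with `cosh · T = sinh`)
satisfy `q_n(y) = Σ_m S(n,m) 2^{n-m} L_m(y)`. -/
theorem tanh_poisson_subordination (T : PowerSeries ℚ) (hT : coshPS * T = sinhPS) :
    ∀ n : ℕ,
      (n.factorial : ℚ) • PowerSeries.coeff (R := Polynomial ℚ) n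
          (expPS (PowerSeries.C (R := Polynomial ℚ) Polynomial.X *
            PowerSeries.map (Polynomial.C : ℚ →+* Polynomial ℚ) T))
        = ∑ m ∈ Finset.range (n + 1),
            (stirlingSecond n m * 2 ^ (n - m)) • laguerreL m := by

  have h0 : PowerSeries.constantCoeff (R := ℚ) T = 0 := constCoeff_T T hT
  have hd : d⁄dX ℚ T = 1 - T ^ 2 := derivT T hT
  have qc : ∀ n j : ℕ,
      (PowerSeries.coeff (R := Polynomial ℚ) n
        (expPS (PowerSeries.C (R := Polynomial ℚ) Polynomial.X *
          PowerSeries.map (Polynomial.C : ℚ →+* Polynomial ℚ) T))).coeff j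
      = (j.factorial : ℚ)⁻¹ * PowerSeries.coeff (R := ℚ) n (T ^ j) := by
    intro n j
    rw [coeff_expF, Polynomial.finset_sum_coeff]
    simp only [Polynomial.coeff_smul, Polynomial.coeff_X_pow, smul_eq_mul, mul_ite, mul_one,
      mul_zero]
    simp only [eq_comm (a := j)]
    rw [Finset.sum_ite_eq' (Finset.range (n + 1)) j]
    by_cases hj : j < n + 1
    · rw [if_pos (Finset.mem_range.mpr hj)]
    · rw [if_neg fun hc => hj (Finset.mem_range.mp hc), a_vanish T h0 (by omega), mul_zero]
  have Rcoeff : ∀ n j : ℕ,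
      (∑ m ∈ Finset.range (n + 1), (stirlingSecond n m * 2 ^ (n - m)) • laguerreL m).coeff j
      = ∑ m ∈ Finset.range (n + 1),
          stirlingSecond n m * 2 ^ (n - m) * (laguerreL m).coeff j := by
    intro n j
    rw [Polynomial.finset_sum_coeff]
    simp only [Polynomial.coeff_smul, smul_eq_mul]
  intro n
  induction n with
  | zero =>
    ext j
    rw [Polynomial.coeff_smul, smul_eq_mul, qc, Rcoeff, Finset.sum_range_one]
    rw [show stirlingSecond 0 0 = 1 from rfl, Lc_zero]
    rcases j with _ | j
    · simp
    · rw [PowerSeries.coeff_zero_eq_constantCoeff_apply, map_pow, h0,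
        zero_pow (Nat.succ_ne_zero j)]
      simp
  | succ n ih =>
    have step1 : ∀ j : ℕ, ∑ m ∈ Finset.range (n + 1 + 1),
        stirlingSecond (n + 1) m * 2 ^ (n + 1 - m) * (laguerreL m).coeff j
        = ∑ m ∈ Finset.range (n + 1), stirlingSecond n m * 2 ^ (n - m) *
            ((laguerreL (m + 1)).coeff j + 2 * (m : ℚ) * (laguerreL m).coeff j) := by
      intro j
      rw [Finset.sum_range_succ' _ (n + 1), stirling_zero]
      simp only [zero_mul, add_zero]
      have claim2 : ∑ i ∈ Finset.range (n + 1),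
          ((i : ℚ) + 1) * stirlingSecond n (i + 1) * 2 ^ (n - i) * (laguerreL (i + 1)).coeff j
          = ∑ m ∈ Finset.range (n + 1),
            2 * (m : ℚ) * stirlingSecond n m * 2 ^ (n - m) * (laguerreL m).coeff j := by
        rw [Finset.sum_range_succ _ n, stirling_eq_zero n (n + 1) (by omega),
          Finset.sum_range_succ' _ n]
        simp only [Nat.cast_zero, mul_zero, zero_mul, add_zero]
        refine Finset.sum_congr rfl fun i hi => ?_
        have hi' := Finset.mem_range.mp hi
        rw [show n - i = n - (i + 1) + 1 from by omega, pow_succ]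
        push_cast
        ring
      have l1 : ∑ i ∈ Finset.range (n + 1),
          stirlingSecond (n + 1) (i + 1) * 2 ^ (n + 1 - (i + 1)) * (laguerreL (i + 1)).coeff j
          = (∑ i ∈ Finset.range (n + 1),
              stirlingSecond n i * 2 ^ (n - i) * (laguerreL (i + 1)).coeff j)
            + ∑ i ∈ Finset.range (n + 1),
              ((i : ℚ) + 1) * stirlingSecond n (i + 1) * 2 ^ (n - i)
                * (laguerreL (i + 1)).coeff j := by
        rw [← Finset.sum_add_distrib]
        refine Finset.sum_congr rfl fun i _ => ?_
        rw [stirling_succ, show n + 1 - (i + 1) = n - i from by omega]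
        push_cast
        ring
      have r1 : ∑ m ∈ Finset.range (n + 1), stirlingSecond n m * 2 ^ (n - m) *
            ((laguerreL (m + 1)).coeff j + 2 * (m : ℚ) * (laguerreL m).coeff j)
          = (∑ m ∈ Finset.range (n + 1),
              stirlingSecond n m * 2 ^ (n - m) * (laguerreL (m + 1)).coeff j)
            + ∑ m ∈ Finset.range (n + 1),
              2 * (m : ℚ) * stirlingSecond n m * 2 ^ (n - m) * (laguerreL m).coeff j := by
        rw [← Finset.sum_add_distrib]
        exact Finset.sum_congr rfl fun m _ => by ring
      rw [l1, r1, claim2]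
    ext j
    rw [Polynomial.coeff_smul, smul_eq_mul, qc, Rcoeff, step1]
    rcases j with _ | i
    · rw [pow_zero, PowerSeries.coeff_one, if_neg (Nat.succ_ne_zero n)]
      rw [mul_zero, mul_zero]
      symm
      refine Finset.sum_eq_zero fun m _ => ?_
      rcases m with _ | m'
      · simp only [zero_add]
        rw [Lc_pos one_ne_zero 0, if_neg (by omega), Lc_zero]
        simp
      · rw [Lc_pos (Nat.succ_ne_zero _) 0, if_neg (by omega),
          Lc_pos (Nat.succ_ne_zero _) 0, if_neg (by omega)]
        simp
    · have r2 : ∑ m ∈ Finset.range (n + 1), stirlingSecond n m * 2 ^ (n - m) *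
            ((laguerreL (m + 1)).coeff (i + 1) + 2 * (m : ℚ) * (laguerreL m).coeff (i + 1))
          = (∑ m ∈ Finset.range (n + 1),
              stirlingSecond n m * 2 ^ (n - m) * (laguerreL m).coeff i)
            - ((i : ℚ) + 1) * ((i : ℚ) + 2) * ∑ m ∈ Finset.range (n + 1),
              stirlingSecond n m * 2 ^ (n - m) * (laguerreL m).coeff (i + 2) := by
        rw [Finset.mul_sum, ← Finset.sum_sub_distrib]
        refine Finset.sum_congr rfl fun m _ => ?_
        rw [KI m i]
        ring
      rw [r2]
      have h1 : ∑ m ∈ Finset.range (n + 1),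
          stirlingSecond n m * 2 ^ (n - m) * (laguerreL m).coeff i
          = (n.factorial : ℚ) * ((i.factorial : ℚ)⁻¹ * PowerSeries.coeff (R := ℚ) n (T ^ i)) := by
        have hc := congrArg (fun p => Polynomial.coeff p i) ih
        simp only [Polynomial.coeff_smul, smul_eq_mul] at hc
        rw [qc, Rcoeff] at hc
        exact hc.symm
      have h2 : ∑ m ∈ Finset.range (n + 1),
          stirlingSecond n m * 2 ^ (n - m) * (laguerreL m).coeff (i + 2)
          = (n.factorial : ℚ) * (((i + 2).factorial : ℚ)⁻¹
              * PowerSeries.coeff (R := ℚ) n (T ^ (i + 2))) := by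
        have hc := congrArg (fun p => Polynomial.coeff p (i + 2)) ih
        simp only [Polynomial.coeff_smul, smul_eq_mul] at hc
        rw [qc, Rcoeff] at hc
        exact hc.symm
      rw [h1, h2]
      have hrec := a_rec T hd i n
      have ha : PowerSeries.coeff (R := ℚ) (n + 1) (T ^ (i + 1))
          = ((i : ℚ) + 1) * (PowerSeries.coeff (R := ℚ) n (T ^ i)
              - PowerSeries.coeff (R := ℚ) n (T ^ (i + 2))) / ((n : ℚ) + 1) := by
        rw [eq_div_iff (by positivity)]
        exact hrec
      rw [ha, Nat.factorial_succ n, Nat.factorial_succ i,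
        show (i + 2).factorial = (i + 2) * (i + 1).factorial from Nat.factorial_succ (i + 1),
        Nat.factorial_succ i]
      have hfi := fact_ne i
      have hn1 : ((n : ℚ) + 1) ≠ 0 := by positivity
      have hi1 : ((i : ℚ) + 1) ≠ 0 := by positivity
      have hi2 : ((i : ℚ) + 2) ≠ 0 := by positivity
      push_cast
      field_simp
end
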